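/- With π as in the explicit stationary distribution of the history-dependent two-level M/M/1 queue, the boundary equation at (ℓ_u,1) holds: (λ₁+μ₁) π(ℓ_u,1) = λ₁ π(ℓ_u−1,1), where π(ℓ,1) = ((φ(ℓ_u) − φ(ℓ−1))/φ(ℓ_u−ℓ_d+1)) π₀ for ℓ_d ≤ ℓ ≤ ℓ_u and φ(i) = Σ_{j=0}^i ρ₁^j with ρ₁ = λ₁/μ₁. -/

import Mathlib

theorem boundary_balance_lu (lam₁ mu₁ ρ₁ π₀ : ℝ)
    (hlam₁ : 0 < lam₁) (hmu₁ : 0 < mu₁) (hρ₁ : ρ₁ = lam₁ / mu₁) (hπ₀ : 0 < π₀)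
    (ℓd ℓu : ℕ) (hd : 1 ≤ ℓd) (hdu : ℓd < ℓu)
    (φ : ℕ → ℝ) (hφ : ∀ i, φ i = ∑ j ∈ Finset.range (i + 1), ρ₁ ^ j) :
    (lam₁ + mu₁) * ((φ ℓu - φ (ℓu - 1)) / φ (ℓu - ℓd + 1) * π₀) =
      lam₁ * ((φ ℓu - φ (ℓu - 1 - 1)) / φ (ℓu - ℓd + 1) * π₀) := by
  obtain ⟨k, rfl⟩ : ∃ k, ℓu = k + 2 := ⟨ℓu - 2, by omega⟩
  have h1 : k + 2 - 1 = k + 1 := by omega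
  have h2 : k + 2 - 1 - 1 = k := by omega
  have d1 : φ (k + 2) - φ (k + 1) = ρ₁ ^ (k + 2) := by
    rw [hφ, hφ, Finset.sum_range_succ]; ring
  have d2 : φ (k + 2) - φ k = ρ₁ ^ (k + 2) + ρ₁ ^ (k + 1) := by
    rw [hφ, hφ, Finset.sum_range_succ, Finset.sum_range_succ]; ring
  rw [h2, h1, d1, d2]
  have hρ : mu₁ * ρ₁ = lam₁ := by rw [hρ₁]; field_simp [hmu₁.ne']
  have key : (lam₁ + mu₁) * ρ₁ ^ (k + 2) = lam₁ * (ρ₁ ^ (k + 2) + ρ₁ ^ (k + 1)) := by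
    linear_combination ρ₁ ^ (k + 1) * hρ
  linear_combination (π₀ / φ (k + 2 - ℓd + 1)) * key
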